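/- arXiv:2208.05944 — 2 statements merged into one kernel-verified Lean document; each statement's English description precedes it below -/
import Mathlib

section
/- Let (Ω, 𝓕, ℙ) be a probability space with a filtration (𝓕_k)_{k ∈ ℕ}, and let (B_k)_{k ∈ ℕ} be a sequence of integrable real-valued random variables adapted to (𝓕_k) with B_k ≥ 0 almost surely for all k. Suppose there is a constant c ≥ 0 such that for every k, the conditional expectation satisfies 𝔼[B_{k+1} | 𝓕_k] ≤ B_k + c almost surely, and suppose B_0 ≤ γ almost surely for some constant γ ∈ [0, 1). Then for every T ∈ ℕ, ℙ( there exists k with 0 ≤ k < T such that B_k ≥ 1 ) ≤ γ + c·T. -/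
open MeasureTheory

open scoped Classical in
/-- The process `B` stopped at the first time it reaches `1`. -/
noncomputable def stoppedB {Ω : Type*} (B : ℕ → Ω → ℝ) : ℕ → Ω → ℝ
  | 0 => B 0
  | (k+1) => {ω | ∃ j ≤ k, 1 ≤ B j ω}.piecewise (stoppedB B k) (B (k+1))

lemma stoppedB_eq {Ω : Type*} {B : ℕ → Ω → ℝ} {k : ℕ} {ω : Ω}
    (h : ∀ j < k, ¬ 1 ≤ B j ω) : stoppedB B k ω = B k ω := by
  cases k with
  | zero => rfl
  | succ k =>
    have : ω ∉ {ω | ∃ j ≤ k, 1 ≤ B j ω} := by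
      rintro ⟨j, hj, hj1⟩
      exact h j (Nat.lt_succ_of_le hj) hj1
    simp [stoppedB, Set.piecewise_eq_of_notMem _ _ _ this]

lemma one_le_stoppedB {Ω : Type*} {B : ℕ → Ω → ℝ} {k : ℕ} {ω : Ω}
    (h : ∃ j < k, 1 ≤ B j ω) : 1 ≤ stoppedB B k ω := by
  induction k with
  | zero => obtain ⟨j, hj, _⟩ := h; omega
  | succ k ih =>
    obtain ⟨j, hj, hj1⟩ := h
    have hmem : ω ∈ {ω | ∃ j ≤ k, 1 ≤ B j ω} := ⟨j, Nat.lt_succ_iff.mp hj, hj1⟩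
    have heq : stoppedB B (k+1) ω = stoppedB B k ω := by
      simp [stoppedB, Set.piecewise_eq_of_mem _ _ _ hmem]
    rw [heq]
    by_cases hlt : ∃ j < k, 1 ≤ B j ω
    · exact ih hlt
    · push_neg at hlt
      have hlt' : ∀ j < k, ¬ 1 ≤ B j ω := fun j hj => not_le.mpr (hlt j hj)
      have hk : j = k := by
        rcases Nat.lt_succ_iff_lt_or_eq.mp hj with h' | h'
        · exact absurd hj1 (hlt' j h')
        · exact h'
      rw [stoppedB_eq hlt']
      exact hk ▸ hj1

lemma stoppedB_nonneg {Ω : Type*} {B : ℕ → Ω → ℝ} {k : ℕ} {ω : Ω}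
    (h : ∀ j, 0 ≤ B j ω) : 0 ≤ stoppedB B k ω := by
  induction k with
  | zero => exact h 0
  | succ k ih =>
    by_cases hmem : ω ∈ {ω | ∃ j ≤ k, 1 ≤ B j ω}
    · simpa [stoppedB, Set.piecewise_eq_of_mem _ _ _ hmem] using ih
    · simpa [stoppedB, Set.piecewise_eq_of_notMem _ _ _ hmem] using h (k+1)

/-- Ville-type inequality for `c`-martingales: if `(B_k)` is a nonnegative integrable process
adapted to a filtration `(𝓕_k)` on a probability space, satisfying
`𝔼[B_{k+1} | 𝓕_k] ≤ B_k + c` a.s. for a constant `c ≥ 0`, and `B_0 ≤ γ` a.s. for some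
`γ ∈ [0, 1)`, then for every `T`, `ℙ(∃ k < T, B_k ≥ 1) ≤ γ + c * T`. -/
theorem cMartingale_exit_prob_le {Ω : Type*} {m0 : MeasurableSpace Ω}
    (μ : Measure Ω) [IsProbabilityMeasure μ]
    (𝓕 : Filtration ℕ m0) (B : ℕ → Ω → ℝ)
    (hAdapted : Adapted 𝓕 B)
    (hInt : ∀ k, Integrable (B k) μ)
    (hNonneg : ∀ k, ∀ᵐ ω ∂μ, 0 ≤ B k ω)
    (c : ℝ) (hc : 0 ≤ c)
    (hMart : ∀ k, μ[B (k + 1) | 𝓕 k] ≤ᵐ[μ] fun ω => B k ω + c)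
    (γ : ℝ) (hγ0 : 0 ≤ γ) (hγ1 : γ < 1)
    (hB0 : ∀ᵐ ω ∂μ, B 0 ω ≤ γ)
    (T : ℕ) :
    μ {ω | ∃ k, k < T ∧ 1 ≤ B k ω} ≤ ENNReal.ofReal (γ + c * T) := by
  classical
  set S : ℕ → Set Ω := fun k => {ω | ∃ j ≤ k, 1 ≤ B j ω} with hSdef
  -- measurability of the stopping sets
  have hS : ∀ k, MeasurableSet[𝓕 k] (S k) := by
    intro k
    have : S k = ⋃ j, {ω | j ≤ k ∧ 1 ≤ B j ω} := by
      ext ω; simp [hSdef]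
    rw [this]
    refine MeasurableSet.iUnion fun j => ?_
    by_cases hj : j ≤ k
    · have : {ω | j ≤ k ∧ 1 ≤ B j ω} = {ω | 1 ≤ B j ω} := by ext ω; simp [hj]
      rw [this]
      exact (𝓕.mono hj) _ ((hAdapted j) measurableSet_Ici)
    · have : {ω | j ≤ k ∧ 1 ≤ B j ω} = ∅ := by ext ω; simp [hj]
      rw [this]; exact @MeasurableSet.empty _ (𝓕 k)
  -- adaptedness of the stopped process
  have hMmeas : ∀ k, StronglyMeasurable[𝓕 k] (stoppedB B k) := by
    intro k
    induction k with
    | zero => exact (hAdapted 0).stronglyMeasurable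
    | succ k ih =>
      show StronglyMeasurable[𝓕 (k+1)] ((S k).piecewise (stoppedB B k) (B (k+1)))
      exact StronglyMeasurable.piecewise (𝓕.mono k.le_succ _ (hS k))
        (ih.mono (𝓕.mono k.le_succ)) (hAdapted (k+1)).stronglyMeasurable
  -- integrability of the stopped process
  have hMint : ∀ k, Integrable (stoppedB B k) μ := by
    intro k
    induction k with
    | zero => exact hInt 0
    | succ k ih =>
      show Integrable ((S k).piecewise (stoppedB B k) (B (k+1))) μ
      exact Integrable.piecewise (𝓕.le k _ (hS k)) ih.integrableOn (hInt (k+1)).integrableOn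
  -- conditional expectation step
  have hstep : ∀ k, μ[stoppedB B (k+1) | 𝓕 k] ≤ᵐ[μ] fun ω => stoppedB B k ω + c := by
    intro k
    have hdecomp : stoppedB B (k+1)
        = (S k).indicator (stoppedB B k) + (S k)ᶜ.indicator (B (k+1)) := by
      funext ω
      by_cases hmem : ω ∈ S k
      · simp [stoppedB, Set.piecewise_eq_of_mem _ _ _ hmem, Set.indicator_of_mem hmem,
          Set.indicator_of_notMem (by simpa using hmem : ω ∉ (S k)ᶜ)]
        exact Set.piecewise_eq_of_mem _ _ _ hmem
      · simp [stoppedB, Set.piecewise_eq_of_notMem _ _ _ hmem, Set.indicator_of_notMem hmem,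
          Set.indicator_of_mem (by simpa using hmem : ω ∈ (S k)ᶜ)]
        exact Set.piecewise_eq_of_notMem _ _ _ hmem
    have hint1 : Integrable ((S k).indicator (stoppedB B k)) μ :=
      (hMint k).indicator (𝓕.le k _ (hS k))
    have hint2 : Integrable ((S k)ᶜ.indicator (B (k+1))) μ :=
      (hInt (k+1)).indicator ((𝓕.le k _ (hS k)).compl)
    have h1 : μ[(S k).indicator (stoppedB B k) | 𝓕 k] =ᵐ[μ] (S k).indicator (stoppedB B k) := by
      rw [condExp_of_stronglyMeasurable (𝓕.le k) ((hMmeas k).indicator (hS k)) hint1]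
    have h2 : μ[(S k)ᶜ.indicator (B (k+1)) | 𝓕 k] =ᵐ[μ] (S k)ᶜ.indicator (μ[B (k+1) | 𝓕 k]) :=
      condExp_indicator (hInt (k+1)) (hS k).compl
    have hadd : μ[stoppedB B (k+1) | 𝓕 k]
        =ᵐ[μ] μ[(S k).indicator (stoppedB B k) | 𝓕 k] + μ[(S k)ᶜ.indicator (B (k+1)) | 𝓕 k] := by
      rw [hdecomp]; exact condExp_add hint1 hint2 _
    filter_upwards [hadd, h1, h2, hMart k] with ω hω h1ω h2ω hmartω
    rw [hω]
    simp only [Pi.add_apply]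
    rw [h1ω, h2ω]
    by_cases hmem : ω ∈ S k
    · rw [Set.indicator_of_mem hmem, Set.indicator_of_notMem (by simpa using hmem)]
      linarith
    · rw [Set.indicator_of_notMem hmem, Set.indicator_of_mem (by simpa using hmem)]
      have hBk : stoppedB B k ω = B k ω := by
        refine stoppedB_eq fun j hj h1 => hmem ⟨j, hj.le, h1⟩
      have := hmartω
      rw [hBk]
      linarith [hmartω]
  -- expectation bound by induction
  have hEint : ∀ k : ℕ, ∫ ω, stoppedB B k ω ∂μ ≤ γ + c * k := by
    intro k
    induction k with
    | zero =>
      have : ∫ ω, stoppedB B 0 ω ∂μ ≤ ∫ _, γ ∂μ :=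
        integral_mono_ae (hInt 0) (integrable_const γ) hB0
      simpa using this
    | succ k ih =>
      have h1 : ∫ ω, stoppedB B (k+1) ω ∂μ = ∫ ω, (μ[stoppedB B (k+1) | 𝓕 k]) ω ∂μ :=
        (integral_condExp (𝓕.le k)).symm
      have h2 : ∫ ω, (μ[stoppedB B (k+1) | 𝓕 k]) ω ∂μ ≤ ∫ ω, (stoppedB B k ω + c) ∂μ :=
        integral_mono_ae integrable_condExp ((hMint k).add (integrable_const c)) (hstep k)
      have h3 : ∫ ω, (stoppedB B k ω + c) ∂μ = (∫ ω, stoppedB B k ω ∂μ) + c := by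
        rw [integral_add (hMint k) (integrable_const c)]; simp
      have : ∫ ω, stoppedB B (k+1) ω ∂μ ≤ (∫ ω, stoppedB B k ω ∂μ) + c := by
        rw [h1, ← h3]; exact h2
      push_cast
      linarith
  -- Markov's inequality
  have hnn : ∀ᵐ ω ∂μ, ∀ j, 0 ≤ B j ω := ae_all_iff.2 hNonneg
  have hMnn : 0 ≤ᵐ[μ] stoppedB B T := by
    filter_upwards [hnn] with ω hω using stoppedB_nonneg hω
  have hmarkov := mul_meas_ge_le_integral_of_nonneg hMnn (hMint T) 1
  rw [one_mul] at hmarkov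
  have hsub : {ω | ∃ k, k < T ∧ 1 ≤ B k ω} ⊆ {x | 1 ≤ stoppedB B T x} := by
    intro ω ⟨k, hk, h1⟩
    exact one_le_stoppedB ⟨k, hk, h1⟩
  calc μ {ω | ∃ k, k < T ∧ 1 ≤ B k ω} ≤ μ {x | 1 ≤ stoppedB B T x} := measure_mono hsub
    _ = ENNReal.ofReal (μ {x | 1 ≤ stoppedB B T x}).toReal := by
        rw [ENNReal.ofReal_toReal (measure_ne_top μ _)]
    _ ≤ ENNReal.ofReal (γ + c * T) :=
        ENNReal.ofReal_le_ofReal (le_trans hmarkov (hEint T))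
end

section
/- (Proposition 1.) Let (Ω, 𝓕, ℙ) be a probability space with a filtration (𝓕_k)_{k ∈ ℕ}, let (x_k)_{k ∈ ℕ} be a sequence of ℝ^n-valued random variables adapted to (𝓕_k), and let B : ℝ^n → ℝ be a measurable function with B(y) ≥ 0 for all y ∈ ℝ^n. Let C, D ⊆ ℝ^n be measurable sets and let γ ∈ [0, 1) and c ≥ 0 be constants such that: (i) B(y) ≤ γ for all y ∈ C; (ii) B(y) ≥ 1 for all y ∈ D; (iii) each B(x_k) is integrable and 𝔼[B(x_{k+1}) | 𝓕_k] ≤ B(x_k) + c almost surely for every k; and (iv) x_0 ∈ C almost surely. Then for every T ∈ ℕ, ℙ( there exists k with 0 ≤ k < T such that x_k ∈ D ) ≤ γ + c·T; equivalently, the trajectory remains outside the unsafe set D during the first T steps with probability at least 1 − γ − c·T. -/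
open MeasureTheory

/-- **Proposition 1.** Let `(x_k)` be an `ℝ^n`-valued process adapted to a filtration `(𝓕_k)`
on a probability space, `B : ℝ^n → ℝ` a nonnegative measurable barrier function, `C` the safe set
and `D` the unsafe set (measurable), `γ ∈ [0,1)` and `c ≥ 0` constants such that
(i) `B ≤ γ` on `C`, (ii) `B ≥ 1` on `D`, (iii) each `B(x_k)` is integrable and
`𝔼[B(x_{k+1}) | 𝓕_k] ≤ B(x_k) + c` a.s., and (iv) `x_0 ∈ C` a.s.  Then for every `T`,
`ℙ(∃ k < T, x_k ∈ D) ≤ γ + c * T`. -/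
theorem barrier_certificate_safety {Ω : Type*} {m0 : MeasurableSpace Ω}
    (μ : Measure Ω) [IsProbabilityMeasure μ] {n : ℕ}
    (𝓕 : Filtration ℕ m0) (x : ℕ → Ω → EuclideanSpace ℝ (Fin n))
    (hAdapted : Adapted 𝓕 x)
    (B : EuclideanSpace ℝ (Fin n) → ℝ)
    (hBmeas : Measurable B) (hBnonneg : ∀ y, 0 ≤ B y)
    (C D : Set (EuclideanSpace ℝ (Fin n)))
    (hCmeas : MeasurableSet C) (hDmeas : MeasurableSet D)
    (γ : ℝ) (hγ0 : 0 ≤ γ) (hγ1 : γ < 1) (c : ℝ) (hc : 0 ≤ c)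
    (hBC : ∀ y ∈ C, B y ≤ γ)
    (hBD : ∀ y ∈ D, 1 ≤ B y)
    (hInt : ∀ k, Integrable (fun ω => B (x k ω)) μ)
    (hMart : ∀ k, μ[fun ω => B (x (k + 1) ω) | 𝓕 k] ≤ᵐ[μ] fun ω => B (x k ω) + c)
    (hx0 : ∀ᵐ ω ∂μ, x 0 ω ∈ C)
    (T : ℕ) :
    μ {ω | ∃ k, k < T ∧ x k ω ∈ D} ≤ ENNReal.ofReal (γ + c * T) := by
  classical
  -- the "no hit of D up to time k" events
  set S : ℕ → Set Ω := fun k => {ω | ∀ j ≤ k, x j ω ∉ D} with hS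
  have hSmeasF : ∀ k, MeasurableSet[𝓕 k] (S k) := by
    intro k
    have : S k = ⋂ j ∈ Finset.range (k + 1), (x j) ⁻¹' Dᶜ := by
      ext ω
      simp [hS, Nat.lt_succ_iff]
    rw [this]
    refine MeasurableSet.biInter (Set.to_countable _) fun j hj => ?_
    have hj' : j ≤ k := Nat.lt_succ_iff.mp (Finset.mem_range.mp hj)
    exact (𝓕.mono hj' _ ((hAdapted j) hDmeas.compl))
  have hSmeas : ∀ k, MeasurableSet (S k) := fun k => 𝓕.le k _ (hSmeasF k)
  have hDk : ∀ k, MeasurableSet ((x k) ⁻¹' D) := fun k =>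
    (𝓕.le k _ ((hAdapted k) hDmeas))
  -- expected value of the stopped process
  set e : ℕ → ℝ := fun k => (μ (S k)ᶜ).toReal + ∫ ω in S k, B (x k ω) ∂μ with he
  have hμfin : ∀ s : Set Ω, μ s ≠ ⊤ := fun s => (measure_lt_top μ s).ne
  have hIntS : ∀ k (s : Set Ω), IntegrableOn (fun ω => B (x k ω)) s μ :=
    fun k s => (hInt k).integrableOn
  -- e 0 ≤ γ
  have hCD : ∀ y ∈ C, y ∉ D := fun y hyC hyD =>
    absurd (le_trans (hBD y hyD) (hBC y hyC)) (not_le.mpr hγ1)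
  have hS0 : ∀ᵐ ω ∂μ, ω ∈ S 0 := by
    filter_upwards [hx0] with ω hω
    intro j hj
    interval_cases j
    exact hCD _ hω
  have he0 : e 0 ≤ γ := by
    have h1 : μ (S 0)ᶜ = 0 := ae_iff.mp hS0
    have h2 : ∫ ω in S 0, B (x 0 ω) ∂μ ≤ ∫ ω, B (x 0 ω) ∂μ :=
      setIntegral_le_integral (hInt 0) (Filter.Eventually.of_forall fun ω => hBnonneg _)
    have h3 : ∫ ω, B (x 0 ω) ∂μ ≤ ∫ _ω, γ ∂μ := by
      refine integral_mono_ae (hInt 0) (integrable_const γ) ?_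
      filter_upwards [hx0] with ω hω
      exact hBC _ hω
    have h4 : ∫ _ω : Ω, γ ∂μ = γ := by simp
    simp only [he, h1, ENNReal.toReal_zero, zero_add]
    linarith
  -- step: e (k+1) ≤ e k + c
  have hstep : ∀ k, e (k + 1) ≤ e k + c := by
    intro k
    haveI : SigmaFinite (μ.trim (𝓕.le k)) := by infer_instance
    set A : Set Ω := S k ∩ (x (k + 1)) ⁻¹' D with hA
    have hAmeas : MeasurableSet A := (hSmeas k).inter (hDk (k + 1))
    have hSsucc : S (k + 1) = S k ∩ (x (k + 1)) ⁻¹' Dᶜ := by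
      ext ω
      simp only [hS, Set.mem_setOf_eq, Set.mem_inter_iff, Set.mem_preimage, Set.mem_compl_iff]
      constructor
      · intro h; exact ⟨fun j hj => h j (hj.trans (Nat.le_succ k)), h (k + 1) le_rfl⟩
      · rintro ⟨h1, h2⟩ j hj
        rcases Nat.lt_succ_iff_lt_or_eq.mp (Nat.lt_succ_of_le hj) with h | h
        · exact h1 j (Nat.lt_succ_iff.mp h)
        · subst h; exact h2
    -- split of S k into S (k+1) and A
    have hsplit : S k = S (k + 1) ∪ A := by
      rw [hSsucc, hA, ← Set.inter_union_distrib_left]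
      simp
    have hdisj : Disjoint (S (k + 1)) A := by
      rw [hSsucc, hA]
      exact Set.disjoint_of_subset (Set.inter_subset_right) (Set.inter_subset_right)
        (disjoint_compl_left.preimage _)
    -- measure of complements
    have hμcompl : μ (S (k + 1))ᶜ = μ (S k)ᶜ + μ A := by
      have h1 : (S (k + 1))ᶜ = (S k)ᶜ ∪ A := by
        rw [hSsucc, hA]
        ext ω
        simp only [Set.mem_compl_iff, Set.mem_inter_iff, Set.mem_union, Set.mem_preimage,
          Set.mem_compl_iff, not_and, not_not]
        tauto
      have h2 : Disjoint ((S k)ᶜ) A :=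
        Set.disjoint_of_subset le_rfl Set.inter_subset_left disjoint_compl_left
      rw [h1, measure_union h2 hAmeas]
    -- integral splits
    have hIsplit : ∫ ω in S k, B (x (k + 1) ω) ∂μ
        = ∫ ω in S (k + 1), B (x (k + 1) ω) ∂μ + ∫ ω in A, B (x (k + 1) ω) ∂μ := by
      rw [hsplit]
      exact setIntegral_union hdisj hAmeas (hIntS (k + 1) _) (hIntS (k + 1) _)
    -- μ A ≤ ∫_A B(x_{k+1})
    have hμA : (μ A).toReal ≤ ∫ ω in A, B (x (k + 1) ω) ∂μ := by
      have h : ∫ _ω in A, (1 : ℝ) ∂μ ≤ ∫ ω in A, B (x (k + 1) ω) ∂μ :=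
        setIntegral_mono_on (integrableOn_const (measure_lt_top μ A).ne)
          (hIntS (k + 1) A) hAmeas fun ω hω => hBD _ hω.2
      simpa [Measure.real] using h
    -- conditional expectation step
    have hcond : ∫ ω in S k, B (x (k + 1) ω) ∂μ ≤ ∫ ω in S k, (B (x k ω) + c) ∂μ := by
      rw [← setIntegral_condExp (𝓕.le k) (hInt (k + 1)) (hSmeasF k)]
      exact setIntegral_mono_ae integrable_condExp.integrableOn
        (((hInt k).add (integrable_const c)).integrableOn) (hMart k)
    have hlast : ∫ ω in S k, (B (x k ω) + c) ∂μ
        ≤ ∫ ω in S k, B (x k ω) ∂μ + c := by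
      rw [integral_add (hIntS k _) (integrable_const c).integrableOn]
      simp only [integral_const, Measure.real, Measure.restrict_apply_univ, smul_eq_mul]
      have hle1 : (μ (S k)).toReal ≤ 1 := by
        have := ENNReal.toReal_mono (hμfin Set.univ)
          (measure_mono (Set.subset_univ (S k)))
        simpa using this
      nlinarith [ENNReal.toReal_nonneg (a := μ (S k))]
    have htoReal : (μ (S (k + 1))ᶜ).toReal = (μ (S k)ᶜ).toReal + (μ A).toReal := by
      rw [hμcompl, ENNReal.toReal_add (hμfin _) (hμfin _)]
    have hnnA : 0 ≤ ∫ ω in A, B (x (k + 1) ω) ∂μ :=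
      setIntegral_nonneg hAmeas fun ω _ => hBnonneg _
    have key : ∫ ω in S (k + 1), B (x (k + 1) ω) ∂μ + ∫ ω in A, B (x (k + 1) ω) ∂μ
        ≤ ∫ ω in S k, B (x k ω) ∂μ + c := by
      rw [← hIsplit]; exact le_trans hcond hlast
    simp only [he]
    linarith
  -- induction: e k ≤ γ + c * k
  have hek : ∀ k, e k ≤ γ + c * k := by
    intro k
    induction k with
    | zero => simpa using he0
    | succ k ih =>
      have := hstep k
      push_cast
      linarith
  -- conclude
  rcases Nat.eq_zero_or_pos T with hT | hT
  · subst hT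
    have hempty : {ω : Ω | ∃ k, k < 0 ∧ x k ω ∈ D} = ∅ := by
      ext ω; simp
    rw [hempty]
    simp
  · obtain ⟨N, rfl⟩ := Nat.exists_eq_succ_of_ne_zero hT.ne'
    have hset : {ω | ∃ k, k < N + 1 ∧ x k ω ∈ D} = (S N)ᶜ := by
      ext ω
      simp only [Set.mem_setOf_eq, Set.mem_compl_iff, hS, not_forall]
      constructor
      · rintro ⟨k, hk, hkD⟩
        exact ⟨k, Nat.lt_succ_iff.mp hk, fun h => h hkD⟩
      · rintro ⟨k, hk, hkD⟩
        exact ⟨k, Nat.lt_succ_of_le hk, not_not.mp hkD⟩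
    rw [hset]
    have hnn : 0 ≤ ∫ ω in S N, B (x N ω) ∂μ :=
      setIntegral_nonneg (hSmeas N) fun ω _ => hBnonneg _
    have h1 : (μ (S N)ᶜ).toReal ≤ γ + c * ((N : ℝ) + 1) := by
      have h2 := hek N
      simp only [he] at h2
      have hcN : c * (N : ℝ) ≤ c * ((N : ℝ) + 1) := by nlinarith [Nat.cast_nonneg (α := ℝ) N]
      linarith
    rw [ENNReal.le_ofReal_iff_toReal_le (hμfin _) (by positivity)]
    push_cast
    exact h1
end
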